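/- Let λ, λ̃ ∈ ℝ, μ, μ̃ ∈ ℝ, and suppose Ȳ is a process bounded by M such that for all T > 0 there is a probability Q_T with Ȳ₀ = E^{Q_T}[Ȳ_T] + (λ − λ̃)T + (μ − μ̃)E^{Q_T}[K_T] where E^{Q_T}[K_T] ≥ 0 and E^{Q_T}[K_T] ≤ C(1 + T) for a constant C. Then: (i) if μ ≤ μ̃ then λ ≥ λ̃ (monotonicity); (ii) |λ̃ − λ| ≤ C|μ̃ − μ| (Lipschitz continuity of μ ↦ λ(μ) with constant C). -/

import Mathlib

open MeasureTheory

/-- Monotonicity and Lipschitz continuity of `μ ↦ λ(μ)`: if the bounded difference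
`Ȳ = Ỹ - Y` of two EBSDE solutions satisfies, for every horizon `T > 0` under the
Girsanov measure `Q_T`, the identity
`Ȳ₀ = E^{Q_T}[Ȳ_T] + (λ - λ̃)T + (μ - μ̃)E^{Q_T}[K_T]` with
`0 ≤ E^{Q_T}[K_T] ≤ C(1+T)`, then `μ ≤ μ̃ → λ̃ ≤ λ` and `|λ̃ - λ| ≤ C|μ̃ - μ|`. -/
theorem stmt16 {Ω : Type*} [MeasurableSpace Ω]
    (Q : ℝ → Measure Ω) (hQ : ∀ T, IsProbabilityMeasure (Q T))
    (Ybar : ℝ → Ω → ℝ) (M : ℝ) (hM : ∀ t ω, |Ybar t ω| ≤ M)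
    (Y0 : ℝ) (hY0 : |Y0| ≤ M)
    (K : ℝ → Ω → ℝ) (C : ℝ)
    (lam lam' μ μ' : ℝ)
    (hKpos : ∀ T > (0 : ℝ), 0 ≤ ∫ ω, K T ω ∂(Q T))
    (hKgrowth : ∀ T > (0 : ℝ), ∫ ω, K T ω ∂(Q T) ≤ C * (1 + T))
    (heq : ∀ T > (0 : ℝ),
      Y0 = (∫ ω, Ybar T ω ∂(Q T)) + (lam - lam') * T + (μ - μ') * ∫ ω, K T ω ∂(Q T)) :
    (μ ≤ μ' → lam' ≤ lam) ∧ |lam' - lam| ≤ C * |μ' - μ| := by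
  have hM0 : 0 ≤ M := le_trans (abs_nonneg _) hY0
  have hC : 0 ≤ C := by have h1 := hKpos 1 one_pos; have h2 := hKgrowth 1 one_pos; linarith
  have hInt : ∀ T > (0 : ℝ), |∫ ω, Ybar T ω ∂(Q T)| ≤ M := by
    intro T hT
    haveI := hQ T
    have h := norm_integral_le_of_norm_le_const (μ := Q T) (f := Ybar T) (C := M)
      (Filter.Eventually.of_forall fun ω => by rw [Real.norm_eq_abs]; exact hM T ω)
    simpa [Real.norm_eq_abs] using h
  constructor
  · intro hμ
    have key : ∀ ε > (0 : ℝ), lam' - lam ≤ 0 + ε := by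
      intro ε hε
      set T : ℝ := (2 * M + 1) / ε with hTdef
      have hT : 0 < T := div_pos (by linarith) hε
      have h1 := heq T hT
      have h2 := hKpos T hT
      have h3 := hInt T hT
      have habs := abs_le.mp h3
      have habsY := abs_le.mp hY0
      have hprod : (μ - μ') * ∫ ω, K T ω ∂(Q T) ≤ 0 :=
        mul_nonpos_of_nonpos_of_nonneg (by linarith) h2
      -- (lam - lam') * T ≥ -2M
      have h4 : (lam' - lam) * T ≤ 2 * M := by nlinarith
      have hTε : T * ε = 2 * M + 1 := by
        rw [hTdef, div_mul_cancel₀ _ hε.ne']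
      nlinarith
    linarith [le_of_forall_pos_le_add key]
  · have key : ∀ ε > (0 : ℝ), |lam' - lam| ≤ C * |μ' - μ| + ε := by
      intro ε hε
      set B : ℝ := C * |μ' - μ| with hB
      have hB0 : 0 ≤ B := mul_nonneg hC (abs_nonneg _)
      set T : ℝ := (2 * M + B + 1) / ε with hTdef
      have hT : 0 < T := div_pos (by linarith) hε
      have h1 := heq T hT
      have h2 := hKpos T hT
      have h2' := hKgrowth T hT
      have h3 := abs_le.mp (hInt T hT)
      have habsY := abs_le.mp hY0
      have hprod : |(μ - μ') * ∫ ω, K T ω ∂(Q T)| ≤ |μ' - μ| * (C * (1 + T)) := by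
        rw [abs_mul, abs_sub_comm]
        have : |∫ ω, K T ω ∂(Q T)| ≤ C * (1 + T) := by
          rw [abs_of_nonneg h2]; exact h2'
        exact mul_le_mul_of_nonneg_left this (abs_nonneg _)
      have hprod' := abs_le.mp hprod
      have h4 : |lam' - lam| * T ≤ 2 * M + B * (1 + T) := by
        have h5 : |(lam' - lam) * T| ≤ 2 * M + B * (1 + T) := by
          rw [abs_le]
          constructor <;> nlinarith [mul_comm C (|μ' - μ|)]
        rwa [abs_mul, abs_of_pos hT] at h5
      have hTε : T * ε = 2 * M + B + 1 := by rw [hTdef, div_mul_cancel₀ _ hε.ne']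
      nlinarith [abs_nonneg (lam' - lam)]
    exact le_of_forall_pos_le_add key
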